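/- Let P be a poset on [n]. Then the cover set P^cov equals the highest cover set P^cov_h (i.e., P^cov is itself independent) if and only if P decomposes into chains: there is a set partition {λ_1, ..., λ_ℓ} of [n] such that P is the union of the chains C_i = {(a,b) : a, b ∈ λ_i, a < b}. -/

import Mathlib

open scoped Classical

abbrev Mat (n : ℕ) (F : Type*) := Matrix (Fin n) (Fin n) F

/-- The set of positions strictly above the diagonal. -/
def PosUpper (n : ℕ) : Set (Fin n × Fin n) := {p | p.1 < p.2}

/-- A poset on `[n]`: a set of strictly-upper positions closed under composition. -/
def IsPoset {n : ℕ} (P : Set (Fin n × Fin n)) : Prop :=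
  P ⊆ PosUpper n ∧ ∀ i j k : Fin n, (i, j) ∈ P → (j, k) ∈ P → (i, k) ∈ P

/-- The normality condition for a pattern poset. -/
def NormalPoset {n : ℕ} (P : Set (Fin n × Fin n)) : Prop :=
  ∀ i j k l : Fin n, i ≤ j → j < k → k ≤ l → (i, l) ∉ P → (j, k) ∉ P

/-- The pattern group `U_P` (as a set of matrices). -/
def UPg {n : ℕ} {F : Type*} [Field F] (P : Set (Fin n × Fin n)) : Set (Mat n F) :=
  {g | (∀ i, g i i = 1) ∧ ∀ i j : Fin n, i ≠ j → (i, j) ∉ P → g i j = 0}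

/-- The algebra `n_P` of strictly upper triangular matrices supported on `P`. -/
def nPa {n : ℕ} {F : Type*} [Field F] (P : Set (Fin n × Fin n)) : Set (Mat n F) :=
  {X | ∀ i j : Fin n, (i, j) ∉ P → X i j = 0}

/-- The support of a matrix. -/
def msupp {n : ℕ} {F : Type*} [Field F] (X : Mat n F) : Set (Fin n × Fin n) :=
  {p | X p.1 p.2 ≠ 0}

/-- `F_q`-labeled set partitions: matrices in `n_P` with at most one nonzero entry
in each row and each column. -/
def SPa {n : ℕ} {F : Type*} [Field F] (P : Set (Fin n × Fin n)) : Set (Mat n F) :=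
  {X | X ∈ nPa P ∧ (∀ i j j' : Fin n, X i j ≠ 0 → X i j' ≠ 0 → j = j') ∧
       (∀ i i' j : Fin n, X i j ≠ 0 → X i' j ≠ 0 → i = i')}

/-- `coadj^L_Q(λ) = {(j,k) ∈ P : ∃ i, (i,k) ∈ supp(λ), (i,j) ∈ Q}`. -/
def coadjL {n : ℕ} {F : Type*} [Field F] (P Q : Set (Fin n × Fin n)) (lam : Mat n F) :
    Set (Fin n × Fin n) :=
  {p | p ∈ P ∧ ∃ i : Fin n, (i, p.2) ∈ msupp lam ∧ (i, p.1) ∈ Q}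

/-- `coadj^R_Q(λ) = {(i,j) ∈ P : ∃ k, (i,k) ∈ supp(λ), (j,k) ∈ Q}`. -/
def coadjR {n : ℕ} {F : Type*} [Field F] (P Q : Set (Fin n × Fin n)) (lam : Mat n F) :
    Set (Fin n × Fin n) :=
  {p | p ∈ P ∧ ∃ k : Fin n, (p.1, k) ∈ msupp lam ∧ (p.2, k) ∈ Q}

/-- `coadj_Q(λ) = coadj^L_Q(λ) ∪ coadj^R_Q(λ)`. -/
def coadjF {n : ℕ} {F : Type*} [Field F] (P Q : Set (Fin n × Fin n)) (lam : Mat n F) :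
    Set (Fin n × Fin n) := coadjL P Q lam ∪ coadjR P Q lam

/-- `coaux_P(λ) = coadj_{[[n]]}(λ) \ coadj_P(λ)`. -/
def coauxF {n : ℕ} {F : Type*} [Field F] (P : Set (Fin n × Fin n)) (lam : Mat n F) :
    Set (Fin n × Fin n) := coadjF P (PosUpper n) lam \ coadjF P P lam

/-- The set of covers of a poset `P`. -/
def covers {n : ℕ} (P : Set (Fin n × Fin n)) : Set (Fin n × Fin n) :=
  {p | p ∈ P ∧ ¬ ∃ j : Fin n, (p.1, j) ∈ P ∧ (j, p.2) ∈ P}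

/-- A set of positions is independent if no two distinct elements share a first
coordinate or a second coordinate. -/
def Indep {n : ℕ} (S : Finset (Fin n × Fin n)) : Prop :=
  ∀ p ∈ S, ∀ q ∈ S, p ≠ q → p.1 ≠ q.1 ∧ p.2 ≠ q.2

/-- The weakly decreasing sequence of lengths `j - i` over `(i,j) ∈ S`, padded with
zeros. -/
noncomputable def lenSeq {n : ℕ} (S : Finset (Fin n × Fin n)) : ℕ → ℕ :=
  fun m => (((S.val.map fun p => (p.2 : ℕ) - (p.1 : ℕ)).sort (· ≤ ·)).reverse.getD m 0)

/-- Lexicographic comparison of integer sequences. -/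
def lexGe (f g : ℕ → ℕ) : Prop :=
  f = g ∨ ∃ m : ℕ, (∀ i < m, f i = g i) ∧ g m < f m

/-- `S` is a highest cover set of the poset `P`. -/
def IsHighestCoverSet {n : ℕ} (P : Set (Fin n × Fin n)) (S : Finset (Fin n × Fin n)) : Prop :=
  ↑S ⊆ covers P ∧ Indep S ∧
    ∀ T : Finset (Fin n × Fin n), ↑T ⊆ covers P → Indep T → lexGe (lenSeq S) (lenSeq T)

/-- `P` decomposes into chains: there is a partition of `[n]` (given by a coloring)
such that `P` consists exactly of the pairs `i < j` lying in a common part. -/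
def DecomposesIntoChains {n : ℕ} (P : Set (Fin n × Fin n)) : Prop :=
  ∃ c : Fin n → Fin n, ∀ i j : Fin n, i < j → ((i, j) ∈ P ↔ c i = c j)

/-- `Q` is a `P`-representative poset. -/
def PRep {n : ℕ} (P Q : Set (Fin n × Fin n)) : Prop :=
  Q ⊆ P ∧ ∀ S : Finset (Fin n × Fin n), IsHighestCoverSet Q S →
    (∀ p ∈ S, ∀ j : Fin n, (p.1, j) ∈ covers Q → (j, p.2) ∉ P) ∧
    (∀ p ∈ S, ∀ j : Fin n, (j, p.2) ∈ covers Q → (p.1, j) ∉ P)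


namespace CovAux

lemma getD_le_of_sorted_head {l : List ℕ} {a : ℕ} (h : (a :: l).Pairwise (· ≥ ·)) (m : ℕ) :
    l.getD m 0 ≤ a := by
  by_cases hm : m < l.length
  · have := (List.pairwise_cons.mp h).1 (l.get ⟨m, hm⟩) (List.get_mem _ _)
    rw [List.getD_eq_getElem l 0 hm]; simpa using this
  · rw [List.getD_eq_default _ _ (by omega)]; exact Nat.zero_le a

lemma getD_succ_le : ∀ (l : List ℕ), l.Pairwise (· ≥ ·) → ∀ m, l.getD (m + 1) 0 ≤ l.getD m 0
  | [], _, m => by simp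
  | a :: l, h, 0 => by simpa using getD_le_of_sorted_head h 0
  | a :: l, h, (m + 1) => by simpa using getD_succ_le l h.of_cons m

lemma sublist_getD_le : ∀ {l₁ l₂ : List ℕ}, List.Sublist l₁ l₂ → l₂.Pairwise (· ≥ ·) →
    ∀ m, l₁.getD m 0 ≤ l₂.getD m 0 := by
  intro l₁ l₂ h
  induction h with
  | slnil => intro _ m; simp
  | @cons l₁ l₂ a h ih =>
      intro hs m
      refine (ih hs.of_cons m).trans ?_
      cases m with
      | zero => simpa using getD_le_of_sorted_head hs 0
      | succ m => rw [List.getD_cons_succ]; exact getD_succ_le _ hs.of_cons m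
  | @cons_cons l₁ l₂ a h ih =>
      intro hs m
      cases m with
      | zero => simp
      | succ m => simpa using ih hs.of_cons m

lemma lenSeq_mono {n : ℕ} {T S : Finset (Fin n × Fin n)} (h : T ⊆ S) (m : ℕ) :
    lenSeq T m ≤ lenSeq S m := by
  set f : Fin n × Fin n → ℕ := fun p => (p.2 : ℕ) - (p.1 : ℕ) with hf
  have hle : T.val.map f ≤ S.val.map f := Multiset.map_le_map (Finset.val_le_iff.mpr h)
  have hsub : List.Sublist ((T.val.map f).sort (· ≤ ·)) ((S.val.map f).sort (· ≤ ·)) := by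
    apply List.sublist_of_subperm_of_pairwise _ (Multiset.pairwise_sort _ _) (Multiset.pairwise_sort _ _)
    rw [← Multiset.coe_le, Multiset.sort_eq, Multiset.sort_eq]
    exact hle
  have hsorted : (((S.val.map f).sort (· ≤ ·)).reverse).Pairwise (· ≥ ·) := by
    simpa [List.pairwise_reverse] using Multiset.pairwise_sort (α := ℕ) _ (· ≤ ·)
  exact sublist_getD_le hsub.reverse hsorted m

lemma lexGe_of_pointwise {f g : ℕ → ℕ} (h : ∀ m, g m ≤ f m) : lexGe f g := by
  by_cases he : f = g
  · exact Or.inl he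
  · right
    have hex : ∃ m, f m ≠ g m := by
      by_contra hc; push_neg at hc; exact he (funext hc)
    refine ⟨Nat.find hex, fun i hi => not_not.mp (Nat.find_min hex hi),
      lt_of_le_of_ne (h _) fun e => Nat.find_spec hex e.symm⟩

section Poset

variable {n : ℕ} {P : Set (Fin n × Fin n)}

lemma lt_of_memP (hP : IsPoset P) {i j : Fin n} (h : (i, j) ∈ P) : (i : ℕ) < (j : ℕ) :=
  hP.1 h

lemma decomp_down (hP : IsPoset P) :
    ∀ (d : ℕ) (i k : Fin n), (k : ℕ) - (i : ℕ) ≤ d → (i, k) ∈ P →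
      ∃ m, (m, k) ∈ covers P ∧ (i = m ∨ (i, m) ∈ P) := by
  intro d
  induction d with
  | zero =>
    intro i k hd hik
    have := lt_of_memP hP hik; omega
  | succ d ih =>
    intro i k hd hik
    by_cases hc : (i, k) ∈ covers P
    · exact ⟨i, hc, Or.inl rfl⟩
    · have hex : ∃ j, (i, j) ∈ P ∧ (j, k) ∈ P := by
        by_contra hno
        exact hc ⟨hik, hno⟩
      obtain ⟨t, h1, h2⟩ := hex
      have hit := lt_of_memP hP h1
      have hik' := lt_of_memP hP hik
      obtain ⟨m, hm, htm⟩ := ih t k (by omega) h2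
      refine ⟨m, hm, Or.inr ?_⟩
      rcases htm with rfl | htm
      · exact h1
      · exact hP.2 i t m h1 htm

lemma decomp_up (hP : IsPoset P) :
    ∀ (d : ℕ) (i k : Fin n), (k : ℕ) - (i : ℕ) ≤ d → (i, k) ∈ P →
      ∃ m, (i, m) ∈ covers P ∧ (m = k ∨ (m, k) ∈ P) := by
  intro d
  induction d with
  | zero =>
    intro i k hd hik
    have := lt_of_memP hP hik; omega
  | succ d ih =>
    intro i k hd hik
    by_cases hc : (i, k) ∈ covers P
    · exact ⟨k, hc, Or.inl rfl⟩
    · have hex : ∃ j, (i, j) ∈ P ∧ (j, k) ∈ P := by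
        by_contra hno
        exact hc ⟨hik, hno⟩
      obtain ⟨t, h1, h2⟩ := hex
      have htk := lt_of_memP hP h2
      obtain ⟨m, hm, htm⟩ := ih i t (by omega) h1
      refine ⟨m, hm, Or.inr ?_⟩
      rcases htm with rfl | htm
      · exact h2
      · exact hP.2 m t k htm h2

/-- Set-level independence of the cover set. -/
def CovIndep (P : Set (Fin n × Fin n)) : Prop :=
  ∀ p ∈ covers P, ∀ q ∈ covers P, p ≠ q → p.1 ≠ q.1 ∧ p.2 ≠ q.2

lemma cover_unique_snd (hI : CovIndep P) {m m' k : Fin n}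
    (h : (m, k) ∈ covers P) (h' : (m', k) ∈ covers P) : m = m' := by
  by_contra hne
  exact (hI _ h _ h' (fun e => hne (congrArg Prod.fst e))).2 rfl

lemma cover_unique_fst (hI : CovIndep P) {m k k' : Fin n}
    (h : (m, k) ∈ covers P) (h' : (m, k') ∈ covers P) : k = k' := by
  by_contra hne
  exact (hI _ h _ h' (fun e => hne (congrArg Prod.snd e))).1 rfl

lemma comp_down (hP : IsPoset P) (hI : CovIndep P) :
    ∀ (d : ℕ) (k i j : Fin n), (k : ℕ) ≤ d → (i, k) ∈ P → (j, k) ∈ P →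
      i = j ∨ (i, j) ∈ P ∨ (j, i) ∈ P := by
  intro d
  induction d with
  | zero =>
    intro k i j hd hik _
    have := lt_of_memP hP hik; omega
  | succ d ih =>
    intro k i j hd hik hjk
    obtain ⟨m, hm, him⟩ := decomp_down hP ((k : ℕ) - (i : ℕ)) i k le_rfl hik
    obtain ⟨m', hm', hjm⟩ := decomp_down hP ((k : ℕ) - (j : ℕ)) j k le_rfl hjk
    obtain rfl : m = m' := cover_unique_snd hI hm hm'
    rcases him with rfl | him
    · rcases hjm with rfl | hjm
      · exact Or.inl rfl
      · exact Or.inr (Or.inr hjm)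
    · rcases hjm with rfl | hjm
      · exact Or.inr (Or.inl him)
      · have hmk := lt_of_memP hP hm.1
        exact ih m i j (by omega) him hjm

lemma comp_up (hP : IsPoset P) (hI : CovIndep P) :
    ∀ (d : ℕ) (m i j : Fin n), n - (m : ℕ) ≤ d → (m, i) ∈ P → (m, j) ∈ P →
      i = j ∨ (i, j) ∈ P ∨ (j, i) ∈ P := by
  intro d
  induction d with
  | zero =>
    intro m i j hd _ _
    have := m.isLt; omega
  | succ d ih =>
    intro m i j hd hmi hmj
    obtain ⟨t, ht, hti⟩ := decomp_up hP ((i : ℕ) - (m : ℕ)) m i le_rfl hmi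
    obtain ⟨t', ht', htj⟩ := decomp_up hP ((j : ℕ) - (m : ℕ)) m j le_rfl hmj
    obtain rfl : t = t' := cover_unique_fst hI ht ht'
    rcases hti with rfl | hti
    · rcases htj with rfl | htj
      · exact Or.inl rfl
      · exact Or.inr (Or.inl htj)
    · rcases htj with rfl | htj
      · exact Or.inr (Or.inr hti)
      · have hmt := lt_of_memP hP ht.1
        have := t.isLt
        exact ih t i j (by omega) hti htj

/-- The color of `i`: the minimal element below-or-equal `i` in `P`. -/
noncomputable def colOf (P : Set (Fin n × Fin n)) (i : Fin n) : Fin n :=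
  if h : n = 0 then i else
  (Finset.univ.filter (fun j => j = i ∨ (j, i) ∈ P)).min' ⟨i, by simp⟩

lemma colOf_spec (P : Set (Fin n × Fin n)) (i : Fin n) :
    colOf P i = i ∨ (colOf P i, i) ∈ P := by
  unfold colOf
  split
  · exact Or.inl rfl
  · have := Finset.min'_mem (Finset.univ.filter (fun j => j = i ∨ (j, i) ∈ P)) ⟨i, by simp⟩
    simpa using this

lemma colOf_min (P : Set (Fin n × Fin n)) {i j : Fin n} (h : j = i ∨ (j, i) ∈ P) :
    colOf P i ≤ j := by
  unfold colOf
  split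
  · rcases h with rfl | h
    · exact le_rfl
    · omega
  · exact Finset.min'_le _ _ (by simp [h])

lemma colOf_eq_of_mem (hP : IsPoset P) (hI : CovIndep P) {i j : Fin n} (hij : (i, j) ∈ P) :
    colOf P i = colOf P j := by
  have hij' := lt_of_memP hP hij
  set m := colOf P j with hm
  have hmj : m = j ∨ (m, j) ∈ P := colOf_spec P j
  have hmi_le : (m : ℕ) ≤ (i : ℕ) := colOf_min P (Or.inr hij)
  have hmj' : (m, j) ∈ P := by
    rcases hmj with he | h
    · exfalso; rw [he] at hmi_le; omega
    · exact h
  have hmDi : m = i ∨ (m, i) ∈ P := by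
    rcases eq_or_lt_of_le hmi_le with he | hlt
    · exact Or.inl (Fin.ext he)
    · rcases comp_down hP hI (j : ℕ) j i m le_rfl hij hmj' with he | h | h
      · exact Or.inl he.symm
      · exact absurd (lt_of_memP hP h) (by omega)
      · exact Or.inr h
  have h1 : colOf P i ≤ m := colOf_min P hmDi
  have h2 : m ≤ colOf P i := by
    rcases colOf_spec P i with he | h
    · rw [he]; exact colOf_min P (Or.inr hij)
    · exact colOf_min P (Or.inr (hP.2 _ _ _ h hij))
  exact le_antisymm h1 h2

lemma mem_of_colOf_eq (hP : IsPoset P) (hI : CovIndep P) {i j : Fin n} (hlt : i < j)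
    (he : colOf P i = colOf P j) : (i, j) ∈ P := by
  have h1 : colOf P i = i ∨ (colOf P i, i) ∈ P := colOf_spec P i
  have h2 : colOf P j = j ∨ (colOf P j, j) ∈ P := colOf_spec P j
  rw [← he] at h2
  set m := colOf P i with hm
  have hmi : m ≤ i := colOf_min P (Or.inl rfl)
  have h2' : (m, j) ∈ P := by
    rcases h2 with he2 | h
    · exfalso
      have : (m : ℕ) = (j : ℕ) := congrArg Fin.val he2
      have : (i : ℕ) < (j : ℕ) := hlt
      have : (m : ℕ) ≤ (i : ℕ) := hmi
      omega
    · exact h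
  rcases h1 with he1 | h
  · rwa [← he1]
  · rcases comp_up hP hI (n - (m : ℕ)) m i j le_rfl h h2' with he3 | hij | hji
    · exact absurd he3 hlt.ne
    · exact hij
    · exfalso
      have := lt_of_memP hP hji
      have : (i : ℕ) < (j : ℕ) := hlt
      omega

lemma chains_of_indep (hP : IsPoset P) (hI : CovIndep P) : DecomposesIntoChains P :=
  ⟨colOf P, fun _ _ hlt =>
    ⟨fun h => colOf_eq_of_mem hP hI h, fun h => mem_of_colOf_eq hP hI hlt h⟩⟩

lemma indep_of_chains (hP : IsPoset P) (hD : DecomposesIntoChains P) : CovIndep P := by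
  obtain ⟨c, hc⟩ := hD
  rintro ⟨i, j⟩ hp ⟨i', j'⟩ hq hne
  have h1 : (i, j) ∈ P := hp.1
  have h2 : (i', j') ∈ P := hq.1
  have hij : i < j := hP.1 h1
  have hij' : i' < j' := hP.1 h2
  constructor
  · rintro (rfl : i = i')
    have hjj : j ≠ j' := fun e => hne (by rw [e])
    have e1 : c i = c j := (hc i j hij).mp h1
    have e2 : c i = c j' := (hc i j' hij').mp h2
    rcases lt_or_gt_of_ne hjj with hlt | hlt
    · exact hq.2 ⟨j, h1, (hc j j' hlt).mpr (e1 ▸ e2)⟩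
    · exact hp.2 ⟨j', h2, (hc j' j hlt).mpr (e2 ▸ e1)⟩
  · rintro (rfl : j = j')
    have hii : i ≠ i' := fun e => hne (by rw [e])
    have e1 : c i = c j := (hc i j hij).mp h1
    have e2 : c i' = c j := (hc i' j hij').mp h2
    rcases lt_or_gt_of_ne hii with hlt | hlt
    · exact hp.2 ⟨i', (hc i i' hlt).mpr (by rw [e1, e2]), h2⟩
    · exact hq.2 ⟨i, (hc i' i hlt).mpr (by rw [e1, e2]), h1⟩

end Poset

end CovAux

/-- `P^cov` is the highest cover set of `P` iff `P` decomposes into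
chains. -/
theorem cov_eq_highest_iff_chains {n : ℕ} (P : Set (Fin n × Fin n)) (hP : IsPoset P) :
    (∃ S : Finset (Fin n × Fin n), IsHighestCoverSet P S ∧ ↑S = covers P) ↔
      DecomposesIntoChains P := by
  constructor
  · rintro ⟨S, hS, hcov⟩
    have hI : CovAux.CovIndep P := by
      intro p hp q hq hne
      refine hS.2.1 p ?_ q ?_ hne
      · rw [← Finset.mem_coe, hcov]; exact hp
      · rw [← Finset.mem_coe, hcov]; exact hq
    exact CovAux.chains_of_indep hP hI
  · intro hD
    have hI := CovAux.indep_of_chains hP hD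
    refine ⟨(covers P).toFinite.toFinset, ⟨?_, ?_, ?_⟩, Set.Finite.coe_toFinset _⟩
    · rw [Set.Finite.coe_toFinset]
    · intro p hp q hq hne
      exact hI p ((Set.Finite.mem_toFinset _).mp hp) q ((Set.Finite.mem_toFinset _).mp hq) hne
    · intro T hT _
      apply CovAux.lexGe_of_pointwise
      intro m
      apply CovAux.lenSeq_mono
      intro x hx
      simp only [Set.Finite.mem_toFinset]
      exact hT hx
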